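/- For every nonnegative integer j, σ₁(36j+30) ≡ 0 (mod 8). -/

import Mathlib

open ArithmeticFunction Finset
open scoped ArithmeticFunction.sigma

lemma cast_odd_zmod2 (d : ℕ) (hd : Odd d) : (d : ZMod 2) = 1 := by
  obtain ⟨m, rfl⟩ := hd
  push_cast
  have : (2 : ZMod 2) = 0 := by decide
  rw [this]; ring

lemma sigma_even_of_odd_nonsquare (k : ℕ) (hk : Odd k) (hsq : ¬ IsSquare k) :
    σ 1 k % 2 = 0 := by
  have hk0 : k ≠ 0 := by rintro rfl; simp [Nat.odd_iff] at hk
  have h2 : ((σ 1 k : ℕ) : ZMod 2) = 0 := by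
    rw [sigma_one_apply, Nat.cast_sum]
    refine Finset.sum_involution (fun d _ => k / d) ?_ ?_ ?_ ?_
    · intro d hd
      have hd' := (Nat.mem_divisors.mp hd).1
      rw [cast_odd_zmod2 d (hk.of_dvd_nat hd'),
        cast_odd_zmod2 _ (hk.of_dvd_nat (Nat.div_dvd_of_dvd hd'))]
      decide
    · intro d hd _ heq
      have hd' := (Nat.mem_divisors.mp hd).1
      exact hsq ⟨d, by rw [← Nat.mul_div_cancel' hd']; exact congrArg (d * ·) heq⟩
    · intro d hd
      exact Nat.mem_divisors.mpr ⟨Nat.div_dvd_of_dvd (Nat.mem_divisors.mp hd).1, hk0⟩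
    · intro d hd
      exact Nat.div_div_self (Nat.mem_divisors.mp hd).1 hk0
  have := (ZMod.natCast_eq_zero_iff _ 2).mp h2
  omega

theorem sigma_36j30_mod8 (j : ℕ) :
    ArithmeticFunction.sigma 1 (36 * j + 30) % 8 = 0 := by
  have hco1 : Nat.Coprime 2 (3 * (6 * j + 5)) := by
    rw [Nat.Prime.coprime_iff_not_dvd Nat.prime_two]
    omega
  have hco2 : Nat.Coprime 3 (6 * j + 5) := by
    rw [Nat.Prime.coprime_iff_not_dvd Nat.prime_three]
    omega
  have hn : 36 * j + 30 = 2 * (3 * (6 * j + 5)) := by ring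
  rw [hn, isMultiplicative_sigma.map_mul_of_coprime hco1,
    isMultiplicative_sigma.map_mul_of_coprime hco2]
  have h2 : σ 1 2 = 3 := by rw [sigma_one_apply]; decide
  have h3 : σ 1 3 = 4 := by rw [sigma_one_apply]; decide
  have hodd : Odd (6 * j + 5) := by rw [Nat.odd_iff]; omega
  have hsq : ¬ IsSquare (6 * j + 5) := by
    rintro ⟨r, hr⟩
    have := Nat.mul_mod r r 3
    have hr3 : r % 3 < 3 := Nat.mod_lt _ (by norm_num)
    interval_cases h : r % 3 <;> omega
  have hk := sigma_even_of_odd_nonsquare _ hodd hsq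
  rw [h2, h3]
  omega
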